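/- Let V be a group admitting a finite normal subgroup K such that V/K is isomorphic to the infinite dihedral group D∞. Then the abelianization H₁(V) of V is finite. In particular, an infinite virtually cyclic group of type II is not of type I. -/

import Mathlib

/-- A group is virtually cyclic if it contains a cyclic subgroup of finite index. -/
def VirtuallyCyclic (G : Type*) [Group G] : Prop :=
  ∃ H : Subgroup G, IsCyclic ↥H ∧ H.FiniteIndex

/-- An infinite virtually cyclic group is of type I if it admits a surjective
homomorphism onto the infinite cyclic group ℤ. -/
def IsTypeI (G : Type*) [Group G] : Prop :=
  ∃ f : G →* Multiplicative ℤ, Function.Surjective f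

/-- An infinite virtually cyclic group is of type II if it admits a surjective
homomorphism onto the infinite dihedral group D∞. -/
def IsTypeII (G : Type*) [Group G] : Prop :=
  ∃ f : G →* DihedralGroup 0, Function.Surjective f

lemma abelianization_of_eq_one_iff {G : Type*} [Group G] (g : G) :
    Abelianization.of g = 1 ↔ g ∈ commutator G :=
  QuotientGroup.eq_one_iff g

open DihedralGroup in
lemma dihedral_r_one_inv : (r (1 : ZMod 0))⁻¹ = r (-1 : ZMod 0) := by
  symm
  apply eq_inv_of_mul_eq_one_left
  rw [r_mul_r, neg_add_cancel, one_def]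

open DihedralGroup in
lemma dihedral_r_one_zpow (i : ℤ) : (r (1 : ZMod 0)) ^ i = r (i : ZMod 0) := by
  induction i using Int.induction_on with
  | zero => rw [zpow_zero, one_def]; rfl
  | succ k ih => rw [zpow_add_one, ih]; exact r_mul_r _ _
  | pred k ih =>
    rw [zpow_sub_one, ih, dihedral_r_one_inv]
    exact r_mul_r _ _

open DihedralGroup in
lemma finite_abelianization_dihedral_zero : Finite (Abelianization (DihedralGroup 0)) := by
  set a := Abelianization.of (r (1 : ZMod 0)) with ha
  set b := Abelianization.of (sr (0 : ZMod 0)) with hb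
  have hb2 : b * b = 1 := by
    rw [hb, ← map_mul, sr_mul_self, map_one]
  have key : sr (0 : ZMod 0) * r (1 : ZMod 0) * sr (0 : ZMod 0) = r (-1 : ZMod 0) := by
    rw [sr_mul_r, sr_mul_sr]
    norm_num
  have hrneg : Abelianization.of (r (-1 : ZMod 0)) = a⁻¹ := by
    rw [← dihedral_r_one_inv, map_inv, ha]
  have ha2 : a * a = 1 := by
    have h1 : b * a * b = a⁻¹ := by
      rw [ha, hb, ← map_mul, ← map_mul, key, hrneg]
    have h2 : b * a * b = a * (b * b) := by
      rw [mul_comm b a, mul_assoc]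
    rw [hb2, mul_one] at h2
    have h3 : a = a⁻¹ := h2.symm.trans h1
    nth_rewrite 1 [h3]
    exact inv_mul_cancel a
  have hr : ∀ j : ZMod 0, Abelianization.of (r j) = 1 ∨ Abelianization.of (r j) = a := by
    intro j
    obtain ⟨i, rfl⟩ : ∃ i : ℤ, ((i : ℤ) : ZMod 0) = j := ⟨(ZMod.cast j : ℤ), ZMod.intCast_zmod_cast j⟩
    rw [← dihedral_r_one_zpow, map_zpow, ← ha]
    have ha2' : a ^ (2 : ℤ) = 1 := by rw [zpow_two, ha2]
    rcases Int.even_or_odd i with ⟨k, hk⟩ | ⟨k, hk⟩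
    · left
      have : i = 2 * k := by omega
      rw [this, zpow_mul, ha2', one_zpow]
    · right
      rw [hk, zpow_add, zpow_mul, ha2', one_zpow, one_mul, zpow_one]
  have huniv : (Set.univ : Set (Abelianization (DihedralGroup 0))) ⊆ {1, a, b, b * a} := by
    intro x _
    obtain ⟨g, rfl⟩ : ∃ g, Abelianization.of g = x := Quot.exists_rep x |>.imp fun g hg => hg
    cases g with
    | r i => rcases hr i with h | h <;> simp [h]
    | sr i =>
      have hsr : sr i = sr (0 : ZMod 0) * r i := by rw [sr_mul_r, zero_add]
      rw [hsr, map_mul]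
      rcases hr i with h | h <;> simp [h, ← hb]
  rw [← Set.finite_univ_iff]
  exact Set.Finite.subset (Set.toFinite _) huniv

/-- If a group `V` has a finite normal subgroup `K` with `V/K` isomorphic to the infinite
dihedral group `D∞`, then the abelianization of `V` is finite. -/
theorem finite_abelianization_of_quotient_dihedral (V : Type*) [Group V]
    (K : Subgroup V) [K.Normal] [Finite K]
    (h : Nonempty ((V ⧸ K) ≃* DihedralGroup 0)) :
    Finite (Abelianization V) := by
  obtain ⟨e⟩ := h
  have hfinD := finite_abelianization_dihedral_zero
  have hfinQ : Finite (Abelianization (V ⧸ K)) :=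
    Finite.of_equiv _ (MulEquiv.abelianizationCongr e).symm.toEquiv
  set π : Abelianization V →* Abelianization (V ⧸ K) :=
    Abelianization.map (QuotientGroup.mk' K) with hπdef
  have hπsurj : Function.Surjective π := by
    intro y
    obtain ⟨q, rfl⟩ : ∃ q, Abelianization.of q = y := Quot.exists_rep y |>.imp fun g hg => hg
    obtain ⟨v, rfl⟩ := QuotientGroup.mk'_surjective K q
    exact ⟨Abelianization.of v, Abelianization.map_of _ _⟩
  -- the kernel of π is contained in the image of K
  have hker : (π.ker : Set (Abelianization V)) ⊆ Abelianization.of '' (K : Set V) := by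
    intro x hx
    obtain ⟨v, rfl⟩ : ∃ v, Abelianization.of v = x := Quot.exists_rep x |>.imp fun g hg => hg
    rw [SetLike.mem_coe, MonoidHom.mem_ker, Abelianization.map_of,
      abelianization_of_eq_one_iff] at hx
    have hcomm : commutator (V ⧸ K) = Subgroup.map (QuotientGroup.mk' K) (commutator V) := by
      rw [commutator_def, commutator_def, Subgroup.map_commutator,
        Subgroup.map_top_of_surjective _ (QuotientGroup.mk'_surjective K)]
    rw [hcomm] at hx
    obtain ⟨c, hc, hcv⟩ := hx
    have hmem : v * c⁻¹ ∈ K := by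
      have h1 : QuotientGroup.mk' K (v * c⁻¹) = 1 := by
        rw [map_mul, map_inv, hcv, mul_inv_cancel]
      rwa [← QuotientGroup.ker_mk' K, MonoidHom.mem_ker]
    refine ⟨v * c⁻¹, hmem, ?_⟩
    rw [map_mul, map_inv]
    have hc1 : Abelianization.of c = 1 := (abelianization_of_eq_one_iff c).mpr hc
    rw [hc1, inv_one, mul_one]
  have hfinK : Finite π.ker := by
    have : (π.ker : Set (Abelianization V)).Finite :=
      Set.Finite.subset (Set.Finite.image _ (Set.toFinite (K : Set V))) hker
    exact this.to_subtype
  have hfinQuot : Finite (Abelianization V ⧸ π.ker) :=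
    Finite.of_equiv _ (QuotientGroup.quotientKerEquivOfSurjective π hπsurj).symm.toEquiv
  exact Finite.of_equiv _ (Subgroup.groupEquivQuotientProdSubgroup (s := π.ker)).symm
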